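/- Let r be a positive integer and a an integer with gcd(r, a−1) = 1. Let u, v ∈ ℤ² be primitive lattice points and suppose M ∈ GL(2,ℤ) satisfies M·u = (0,1) and M·v = (r, 1−a) (so the cone spanned by u and v has singularity type 1/r(1,a−1)). Then: (i) the gcd of the two coordinates of v − u equals gcd(r,a) (the width of the cone equals gcd(r,a)); and (ii) there exists a primitive pair (p,q) ∈ ℤ² with p·u₁ + q·u₂ = p·v₁ + q·v₂ = r/gcd(r,a) (the local index of the cone, i.e. the lattice height of the segment uv above the origin, equals r/gcd(r,a)). -/

import Mathlib

lemma gcd_dvd_mulVec (A : Matrix (Fin 2) (Fin 2) ℤ) (x : Fin 2 → ℤ) :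
    Int.gcd (x 0) (x 1) ∣ Int.gcd ((A.mulVec x) 0) ((A.mulVec x) 1) := by
  have h : ∀ i, ((Int.gcd (x 0) (x 1) : ℤ)) ∣ (A.mulVec x) i := by
    intro i
    have : (A.mulVec x) i = A i 0 * x 0 + A i 1 * x 1 := by
      simp [Matrix.mulVec, dotProduct, Fin.sum_univ_two]
    rw [this]
    exact dvd_add ((Int.gcd_dvd_left _ _).mul_left _) ((Int.gcd_dvd_right _ _).mul_left _)
  have := Int.dvd_coe_gcd (h 0) (h 1)
  exact_mod_cast this

lemma gcd_mulVec_eq (M : Matrix (Fin 2) (Fin 2) ℤ) (hM : M.det = 1 ∨ M.det = -1)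
    (w : Fin 2 → ℤ) :
    Int.gcd ((M.mulVec w) 0) ((M.mulVec w) 1) = Int.gcd (w 0) (w 1) := by
  set N := M.det • M.adjugate with hN
  have hNM : N * M = 1 := by
    have h1 : M.adjugate * M = M.det • 1 := Matrix.adjugate_mul M
    rw [hN, Matrix.smul_mul, h1, smul_smul]
    rcases hM with h | h <;> simp [h]
  have hw : N.mulVec (M.mulVec w) = w := by
    rw [Matrix.mulVec_mulVec, hNM, Matrix.one_mulVec]
  refine Nat.dvd_antisymm ?_ (gcd_dvd_mulVec M w)
  have := gcd_dvd_mulVec N (M.mulVec w)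
  rwa [hw] at this

/-- For a cone of singularity type `1/r(1, a-1)` spanned by primitive
lattice points `u, v` (normalized by some `M ∈ GL(2,ℤ)` to `(0,1)` and `(r, 1-a)`),
the width of the cone (lattice length of `v - u`) equals `gcd(r, a)`, and the local
index (lattice height of the segment `uv` above the origin, i.e. the common value of
a primitive linear functional at `u` and `v`) equals `r / gcd(r, a)`. -/
theorem stmt_0 (r a : ℤ) (hr : 0 < r) (hra : Int.gcd r (a - 1) = 1)
    (u v : Fin 2 → ℤ)
    (hu : Int.gcd (u 0) (u 1) = 1) (hv : Int.gcd (v 0) (v 1) = 1)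
    (M : Matrix (Fin 2) (Fin 2) ℤ) (hM : M.det = 1 ∨ M.det = -1)
    (hMu : M.mulVec u = ![0, 1]) (hMv : M.mulVec v = ![r, 1 - a]) :
    (Int.gcd (v 0 - u 0) (v 1 - u 1) = Int.gcd r a) ∧
    (∃ p q : ℤ, Int.gcd p q = 1 ∧
      p * u 0 + q * u 1 = r / (Int.gcd r a : ℤ) ∧
      p * v 0 + q * v 1 = r / (Int.gcd r a : ℤ)) := by
  -- entries of M.mulVec u and v
  have hMu0 : M 0 0 * u 0 + M 0 1 * u 1 = 0 := by
    have := congrFun hMu 0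
    simpa [Matrix.mulVec, dotProduct, Fin.sum_univ_two] using this
  have hMu1 : M 1 0 * u 0 + M 1 1 * u 1 = 1 := by
    have := congrFun hMu 1
    simpa [Matrix.mulVec, dotProduct, Fin.sum_univ_two] using this
  have hMv0 : M 0 0 * v 0 + M 0 1 * v 1 = r := by
    have := congrFun hMv 0
    simpa [Matrix.mulVec, dotProduct, Fin.sum_univ_two] using this
  have hMv1 : M 1 0 * v 0 + M 1 1 * v 1 = 1 - a := by
    have := congrFun hMv 1
    simpa [Matrix.mulVec, dotProduct, Fin.sum_univ_two] using this
  set g : ℕ := Int.gcd r a with hg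
  have hgdr : (g : ℤ) ∣ r := Int.gcd_dvd_left r a
  have hgda : (g : ℤ) ∣ a := Int.gcd_dvd_right r a
  have hgpos : 0 < (g : ℤ) := by
    have : g ≠ 0 := by
      intro h
      rw [hg, Int.gcd_eq_zero_iff] at h
      omega
    exact_mod_cast Nat.pos_of_ne_zero this
  obtain ⟨r', hr'⟩ := hgdr
  obtain ⟨a', ha'⟩ := hgda
  constructor
  · -- width part
    have key := gcd_mulVec_eq M hM (v - u)
    have hsub : M.mulVec (v - u) = ![r, -a] := by
      rw [Matrix.mulVec_sub, hMu, hMv]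
      funext i
      fin_cases i <;> simp <;> ring
    rw [hsub] at key
    simpa [Int.gcd, hg] using key.symm
  · -- local index part
    have hgne : (g : ℤ) ≠ 0 := ne_of_gt hgpos
    have hrg : r / (g : ℤ) = r' := by rw [hr']; exact Int.mul_ediv_cancel_left _ hgne
    have hag : a / (g : ℤ) = a' := by rw [ha']; exact Int.mul_ediv_cancel_left _ hgne
    -- primitive pair in normalized coordinates: (a', r')
    have hprim : Int.gcd a' r' = 1 := by
      have hpos : 0 < Int.gcd a r := by rw [Int.gcd_comm]; exact_mod_cast hgpos
      have := Int.gcd_div_gcd_div_gcd hpos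
      have hgc : Int.gcd a r = g := Int.gcd_comm a r
      rw [hgc] at this
      rwa [hag, hrg] at this
    refine ⟨a' * M 0 0 + r' * M 1 0, a' * M 0 1 + r' * M 1 1, ?_, ?_, ?_⟩
    · -- primitivity via transpose
      have key := gcd_mulVec_eq M.transpose (by rw [Matrix.det_transpose]; exact hM) ![a', r']
      have h0 : (M.transpose.mulVec ![a', r']) 0 = a' * M 0 0 + r' * M 1 0 := by
        simp [Matrix.mulVec, dotProduct, Fin.sum_univ_two, Matrix.transpose]; ring
      have h1 : (M.transpose.mulVec ![a', r']) 1 = a' * M 0 1 + r' * M 1 1 := by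
        simp [Matrix.mulVec, dotProduct, Fin.sum_univ_two, Matrix.transpose]; ring
      rw [h0, h1] at key
      rw [key]
      simpa using hprim
    · rw [hrg]
      have : (a' * M 0 0 + r' * M 1 0) * u 0 + (a' * M 0 1 + r' * M 1 1) * u 1
          = a' * (M 0 0 * u 0 + M 0 1 * u 1) + r' * (M 1 0 * u 0 + M 1 1 * u 1) := by ring
      rw [this, hMu0, hMu1]; ring
    · rw [hrg]
      have : (a' * M 0 0 + r' * M 1 0) * v 0 + (a' * M 0 1 + r' * M 1 1) * v 1
          = a' * (M 0 0 * v 0 + M 0 1 * v 1) + r' * (M 1 0 * v 0 + M 1 1 * v 1) := by ring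
      rw [this, hMv0, hMv1]
      -- a' * r + r' * (1 - a) = r', using r = g*r', a = g*a'
      have : a' * r + r' * (1 - a) = a' * ((g:ℤ) * r') + r' * 1 - r' * ((g:ℤ) * a') := by
        rw [← hr', ← ha']; ring
      rw [this]; ring
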